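/- Let n ≥ 2 and let λ_0, …, λ_n ∈ ℂ be all nonzero with Σ_{i=0}^n λ_i = 0. Set a_i = λ_i · ∏_{j≠i} x_j ∈ MvPolynomial (Fin (n+1)) ℂ (so that ω = Σ_i a_i dx_i is the polynomial form associated to the logarithmic form Σ_i λ_i dx_i/x_i). Then: (a) Σ_i x_i a_i = 0; (b) for each i, the coordinate hyperplane x_i = 0 is invariant for ω, i.e. x_i divides a_k for every k ≠ i; and (c) the Jacobian determinant det(∂_j a_i)_{0≤i,j≤n} is not the zero polynomial. Hence ω defines a degree-(n−1) foliation with non-degenerate Gauss map that leaves invariant exactly (n+1) = ((n+1)/(n−1))·(n−1) hyperplanes, showing the bound of the invariant-hyperplane proposition is sharp. -/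

import Mathlib

open MvPolynomial

noncomputable section

/-- A linear form: a nonzero homogeneous polynomial of degree 1. -/
def IsLinearForm (n : ℕ) (α : MvPolynomial (Fin (n + 1)) ℂ) : Prop :=
  α ≠ 0 ∧ α.IsHomogeneous 1

/-- A completely reducible polynomial: a product of linear forms. -/
def CompletelyReducible (n : ℕ) (P : MvPolynomial (Fin (n + 1)) ℂ) : Prop :=
  ∃ s : Multiset (MvPolynomial (Fin (n + 1)) ℂ),
    (∀ α ∈ s, IsLinearForm n α) ∧ P = s.prod

/-- F and G have no common non-unit factor. -/
def RelPrime (n : ℕ) (F G : MvPolynomial (Fin (n + 1)) ℂ) : Prop :=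
  ∀ p : MvPolynomial (Fin (n + 1)) ℂ, p ∣ F → p ∣ G → IsUnit p

/-- The generic fiber of the pencil generated by F and G is irreducible. -/
def GenericFiberIrreducible (n : ℕ) (F G : MvPolynomial (Fin (n + 1)) ℂ) : Prop :=
  {c : ℂ | ¬ Irreducible (F + C c * G)}.Finite

/-- A product of variables is a monomial with exponent vector the sum of singles. -/
lemma prod_X_eq_monomial_aux (n : ℕ) (t : Finset (Fin (n+1))) :
    (∏ l ∈ t, (X l : MvPolynomial (Fin (n+1)) ℂ)) =
      monomial (∑ l ∈ t, Finsupp.single l 1) 1 := by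
  classical
  induction t using Finset.induction_on with
  | empty => simp [monomial_zero']
  | insert _ _ h ih =>
      rw [Finset.prod_insert h, Finset.sum_insert h, ih, X, monomial_mul, one_mul]

/-- The determinant of the "all ones off the diagonal, zero on the diagonal" matrix
of size n+1 is nonzero (for n ≥ 1). -/
lemma det_offdiag_ones_ne_zero (n : ℕ) (hn : 1 ≤ n) :
    (Matrix.of fun i j : Fin (n+1) => if i = j then (0:ℂ) else 1).det ≠ 0 := by
  have h1 : (Matrix.of fun i j : Fin (n+1) => if i = j then (0:ℂ) else 1)
      = - (1 + Matrix.replicateCol Unit (fun _ => (1:ℂ)) * Matrix.replicateRow Unit (fun _ => (-1:ℂ))) := by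
    ext i j
    by_cases h : i = j <;>
      simp [Matrix.mul_apply, Matrix.one_apply, h]
  rw [h1, Matrix.det_neg, Matrix.det_one_add_replicateCol_mul_replicateRow]
  simp only [dotProduct, neg_one_mul, one_mul, Finset.sum_neg_distrib, Finset.sum_const,
    Finset.card_univ, Fintype.card_fin, nsmul_eq_mul, mul_one]
  have h2 : (1 : ℂ) + -(n+1 : ℕ) = -(n:ℂ) := by push_cast; ring
  rw [h2]
  have : (n:ℂ) ≠ 0 := by exact_mod_cast (by omega : n ≠ 0)
  simp [this]

/-- Sharpness example: for λ₀, …, λₙ all nonzero with Σλᵢ = 0, the form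
ω = Σᵢ aᵢ dxᵢ with aᵢ = λᵢ·∏_{j≠i} xⱼ (coming from the logarithmic form Σ λᵢ dxᵢ/xᵢ)
satisfies (a) Σ xᵢaᵢ = 0, (b) every coordinate hyperplane xᵢ = 0 is invariant
(xᵢ divides aₖ for all k ≠ i), and (c) its Jacobian determinant is nonzero. -/
theorem logarithmic_example_sharp
    (n : ℕ) (hn : 2 ≤ n)
    (lam : Fin (n + 1) → ℂ)
    (hlam : ∀ i, lam i ≠ 0) (hsum : ∑ i, lam i = 0)
    (a : Fin (n + 1) → MvPolynomial (Fin (n + 1)) ℂ)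
    (ha : ∀ i, a i = C (lam i) * ∏ j ∈ Finset.univ.erase i, X j) :
    (∑ i, X i * a i = 0) ∧
    (∀ i k : Fin (n + 1), k ≠ i → X i ∣ a k) ∧
    (Matrix.of fun i j => pderiv j (a i)).det ≠ 0 := by
  refine ⟨?_, ?_, ?_⟩
  · have h1 : ∀ i : Fin (n+1), X i * a i = C (lam i) * ∏ j, X j := by
      intro i
      rw [ha i, mul_left_comm, Finset.mul_prod_erase _ _ (Finset.mem_univ i)]
    calc ∑ i, X i * a i = ∑ i, C (lam i) * ∏ j, X j := by simp_rw [h1]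
      _ = C (∑ i, lam i) * ∏ j, X j := by rw [← Finset.sum_mul, ← map_sum]
      _ = 0 := by rw [hsum, map_zero, zero_mul]
  · intro i k hki
    rw [ha k]
    exact Dvd.dvd.mul_left
      (Finset.dvd_prod_of_mem _ (Finset.mem_erase.2 ⟨Ne.symm hki, Finset.mem_univ i⟩)) _
  · set d : Fin (n+1) → (Fin (n+1) →₀ ℕ) :=
      fun i => ∑ l ∈ Finset.univ.erase i, Finsupp.single l 1 with hd
    have hdval : ∀ i j, d i j = if j = i then 0 else 1 := by
      intro i j
      rw [hd]
      simp only [Finsupp.finset_sum_apply, Finsupp.single_apply]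
      rw [Finset.sum_ite_eq']
      simp [Finset.mem_erase]
    have ha' : ∀ i, a i = C (lam i) * monomial (d i) 1 := by
      intro i; rw [ha i, prod_X_eq_monomial_aux]
    set φ := eval (fun _ : Fin (n+1) => (1:ℂ)) with hφ
    have key : ∀ i j, φ (pderiv j (a i)) = lam i * (if j = i then 0 else 1) := by
      intro i j
      rw [ha' i, Derivation.leibniz]
      simp only [pderiv_C, smul_eq_mul, mul_zero, zero_mul, add_zero, zero_add,
        pderiv_monomial, smul_eq_mul]
      rw [hφ]
      simp [eval_monomial, Finsupp.prod, hdval i j]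
    intro hdet
    have h0 : φ ((Matrix.of fun i j => pderiv j (a i)).det) = 0 := by rw [hdet, map_zero]
    rw [RingHom.map_det] at h0
    have hmap : φ.mapMatrix (Matrix.of fun i j => pderiv j (a i))
        = Matrix.diagonal lam * (Matrix.of fun i j : Fin (n+1) => if i = j then (0:ℂ) else 1) := by
      ext i j
      rw [Matrix.diagonal_mul]
      simp only [RingHom.mapMatrix_apply, Matrix.map_apply, Matrix.of_apply]
      rw [key i j]
      by_cases h : i = j <;> simp [h, eq_comm]
    rw [hmap, Matrix.det_mul, Matrix.det_diagonal] at h0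
    rcases mul_eq_zero.1 h0 with h | h
    · exact (Finset.prod_ne_zero_iff.2 fun i _ => hlam i) h
    · exact det_offdiag_ones_ne_zero n (by omega) h
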